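/- There exist real constants c > 0 and C > 0 such that for every real number L ≥ 1, c * L^(13/2) ≤ N(L) ≤ C * L^(13/2), where N(L) := Nat.card {(a,b) : ℤ × ℤ | (|a| : ℝ) ≤ L^3 ∧ (|b| : ℝ) ≤ L^4 ∧ ((a^2 * |b| : ℤ) : ℝ) ≤ L^9} and L^(13/2) denotes Real.rpow L (13/2). -/

import Mathlib

open Finset


lemma abs_le_nfloor (z : ℤ) (x : ℝ) (h : (|z| : ℝ) ≤ x) : |z| ≤ (⌊x⌋₊ : ℤ) := by
  have h1 : (|z|.toNat : ℝ) ≤ x := by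
    have h2 : ((|z|.toNat : ℤ) : ℝ) ≤ x := by
      rw [Int.toNat_of_nonneg (abs_nonneg z)]; exact_mod_cast h
    exact_mod_cast h2
  have := Nat.le_floor h1
  omega

lemma icc_succ (c A : ℤ) (h : c ≤ A + 1) :
    Finset.Icc c (A+1) = insert (A+1) (Finset.Icc c A) := by
  ext x; simp [Finset.mem_Icc]; omega

lemma sum_inv_sq_aux (M : ℕ) (hM : 1 ≤ M) :
    ∀ A : ℤ, (M:ℤ) ≤ A →
      ∑ a ∈ Finset.Icc ((M:ℤ)+1) A, ((a:ℝ)^2)⁻¹ ≤ (M:ℝ)⁻¹ - ((A:ℝ))⁻¹ := by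
  refine Int.le_induction ?_ ?_
  · simp
  · intro A hA ih
    rw [icc_succ _ _ (by omega), Finset.sum_insert (by simp)]
    have hA1 : (1:ℝ) ≤ (A:ℝ) := by exact_mod_cast le_trans (by exact_mod_cast hM) hA
    have h0 : (0:ℝ) < A := by linarith
    have key : (A:ℝ)⁻¹ - ((A:ℝ)+1)⁻¹ = ((A:ℝ)*((A:ℝ)+1))⁻¹ := by
      field_simp
      ring
    have h1 : (((A:ℝ)+1)^2)⁻¹ ≤ (A:ℝ)⁻¹ - ((A:ℝ)+1)⁻¹ := by
      rw [key]
      apply inv_anti₀ (by positivity)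
      nlinarith
    push_cast
    linarith [ih]

lemma sum_inv_sq (M : ℕ) (hM : 1 ≤ M) (A : ℤ) :
    ∑ a ∈ Finset.Icc ((M:ℤ)+1) A, ((a:ℝ)^2)⁻¹ ≤ (M:ℝ)⁻¹ := by
  rcases le_or_gt ((M:ℤ)) A with h | h
  · have hA : (0:ℝ) < (A:ℝ) := by
      have h1 : (1:ℤ) ≤ A := le_trans (by exact_mod_cast hM) h
      exact_mod_cast lt_of_lt_of_le zero_lt_one (by exact_mod_cast h1)
    have : (0:ℝ) ≤ ((A:ℝ))⁻¹ := by positivity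
    linarith [sum_inv_sq_aux M hM A h]
  · rw [Finset.Icc_eq_empty (by omega)]
    simp


set_option maxHeartbeats 1600000 in
/-- The number of integer lattice points `(a,b)` with `|a| ≤ L³`, `|b| ≤ L⁴`,
`a²|b| ≤ L⁹` is `Θ(L^(13/2))` for `L ≥ 1`. -/
theorem stmt_3 :
    ∃ c C : ℝ, 0 < c ∧ 0 < C ∧ ∀ L : ℝ, 1 ≤ L →
      c * L ^ ((13 : ℝ) / 2) ≤
        (Nat.card {ab : ℤ × ℤ | (|ab.1| : ℝ) ≤ L ^ 3 ∧ (|ab.2| : ℝ) ≤ L ^ 4 ∧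
          ((ab.1 ^ 2 * |ab.2| : ℤ) : ℝ) ≤ L ^ 9} : ℝ) ∧
      (Nat.card {ab : ℤ × ℤ | (|ab.1| : ℝ) ≤ L ^ 3 ∧ (|ab.2| : ℝ) ≤ L ^ 4 ∧
          ((ab.1 ^ 2 * |ab.2| : ℤ) : ℝ) ≤ L ^ 9} : ℝ) ≤ C * L ^ ((13 : ℝ) / 2) := by
  refine ⟨1, 100, one_pos, by norm_num, fun L hL => ⟨?_, ?_⟩⟩
  ·
    have hL0 : (0:ℝ) < L := lt_of_lt_of_le one_pos hL
    set S : Set (ℤ × ℤ) := {ab : ℤ × ℤ | (|ab.1| : ℝ) ≤ L ^ 3 ∧ (|ab.2| : ℝ) ≤ L ^ 4 ∧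
          ((ab.1 ^ 2 * |ab.2| : ℤ) : ℝ) ≤ L ^ 9} with hSdef
    set A : ℕ := ⌊L^3⌋₊ with hA
    set B : ℕ := ⌊L^4⌋₊ with hB
    set M : ℕ := ⌊L^((5:ℝ)/2)⌋₊ with hM
    have hr52 : (0:ℝ) < L ^ ((5:ℝ)/2) := Real.rpow_pos_of_pos hL0 _
    have hMle : (M:ℝ) ≤ L ^ ((5:ℝ)/2) := Nat.floor_le hr52.le
    have hBle : (B:ℝ) ≤ L ^ 4 := Nat.floor_le (by positivity)
    have e52sq : (L ^ ((5:ℝ)/2))^2 = L ^ (5:ℕ) := by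
      rw [← Real.rpow_natCast (L ^ ((5:ℝ)/2)) 2, ← Real.rpow_mul hL0.le,
        ← Real.rpow_natCast L 5]
      norm_num
    have e54 : L ^ ((5:ℝ)/2) * L ^ (4:ℕ) = L ^ ((13:ℝ)/2) := by
      rw [← Real.rpow_natCast L 4, ← Real.rpow_add hL0]
      norm_num
    have e523 : L ^ ((5:ℝ)/2) ≤ L ^ (3:ℕ) := by
      rw [← Real.rpow_natCast L 3]
      exact Real.rpow_le_rpow_of_exponent_le hL (by norm_num)
    -- subset finset
    have hsub : S ⊆ ↑((Finset.Icc (-(A:ℤ)) A) ×ˢ (Finset.Icc (-(B:ℤ)) B)) := by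
      rintro ⟨a, b⟩ ⟨h1, h2, h3⟩
      have ha : |a| ≤ (A:ℤ) := abs_le_nfloor a _ (by exact_mod_cast h1)
      have hb : |b| ≤ (B:ℤ) := abs_le_nfloor b _ (by exact_mod_cast h2)
      simp only [Finset.coe_product, Set.mem_prod, Finset.mem_coe, Finset.mem_Icc]
      constructor <;> [exact abs_le.mp ha; exact abs_le.mp hb]
    have hfin : S.Finite := Set.Finite.subset (Finset.finite_toSet _) hsub
    -- lower bound
    set G : Finset (ℤ × ℤ) := (Finset.Icc (0:ℤ) M) ×ˢ (Finset.Icc (0:ℤ) B) with hG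
    have hGS : ↑G ⊆ S := by
      rintro ⟨a, b⟩ hab
      simp only [hG, Finset.coe_product, Set.mem_prod, Finset.mem_coe, Finset.mem_Icc] at hab
      obtain ⟨⟨ha0, haM⟩, hb0, hbB⟩ := hab
      have haR : (a:ℝ) ≤ (M:ℝ) := by exact_mod_cast haM
      have ha0R : (0:ℝ) ≤ (a:ℝ) := by exact_mod_cast ha0
      have hbR : (b:ℝ) ≤ (B:ℝ) := by exact_mod_cast hbB
      have hb0R : (0:ℝ) ≤ (b:ℝ) := by exact_mod_cast hb0
      refine ⟨?_, ?_, ?_⟩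
      · show |(a:ℝ)| ≤ L ^ 3
        rw [abs_of_nonneg ha0R]
        calc (a:ℝ) ≤ (M:ℝ) := haR
          _ ≤ L ^ ((5:ℝ)/2) := hMle
          _ ≤ L ^ 3 := e523
      · show |(b:ℝ)| ≤ L ^ 4
        rw [abs_of_nonneg hb0R]
        exact le_trans hbR hBle
      · show ((↑(a ^ 2 * |b|) : ℝ)) ≤ L ^ 9
        push_cast
        rw [abs_of_nonneg hb0R]
        have h1 : (a:ℝ)^2 ≤ L ^ (5:ℕ) := by
          rw [← e52sq]
          have : (a:ℝ) ≤ L ^ ((5:ℝ)/2) := le_trans haR hMle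
          nlinarith
        have h2 : (b:ℝ) ≤ L ^ 4 := le_trans hbR hBle
        calc (a:ℝ)^2 * (b:ℝ) ≤ L ^ (5:ℕ) * L ^ 4 := by
              apply mul_le_mul h1 h2 hb0R (by positivity)
          _ = L ^ 9 := by ring
    have hcard : G.card ≤ Nat.card S := by
      calc G.card = Nat.card (↑G : Set (ℤ × ℤ)) := by
            simp [Nat.card_coe_set_eq, Set.ncard_coe_finset]
        _ ≤ Nat.card S := Nat.card_mono hfin hGS
    have hGcard : G.card = (M + 1) * (B + 1) := by
      simp [hG, Int.card_Icc]
    have hlow : L ^ ((13:ℝ)/2) ≤ ((M + 1) * (B + 1) : ℕ) := by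
      push_cast
      have h1 : L ^ ((5:ℝ)/2) < (M:ℝ) + 1 := Nat.lt_floor_add_one _
      have h2 : L ^ (4:ℕ) < (B:ℝ) + 1 := Nat.lt_floor_add_one _
      calc L ^ ((13:ℝ)/2) = L ^ ((5:ℝ)/2) * L ^ (4:ℕ) := e54.symm
        _ ≤ ((M:ℝ) + 1) * ((B:ℝ) + 1) := by nlinarith [hr52, pow_pos hL0 4]
    rw [one_mul]
    calc L ^ ((13:ℝ)/2) ≤ ((M + 1) * (B + 1) : ℕ) := hlow
      _ = (G.card : ℝ) := by rw [hGcard]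
      _ ≤ (Nat.card S : ℝ) := by exact_mod_cast hcard
  
  ·
      have hL0 : (0:ℝ) < L := lt_of_lt_of_le one_pos hL
      set S : Set (ℤ × ℤ) := {ab : ℤ × ℤ | (|ab.1| : ℝ) ≤ L ^ 3 ∧ (|ab.2| : ℝ) ≤ L ^ 4 ∧
            ((ab.1 ^ 2 * |ab.2| : ℤ) : ℝ) ≤ L ^ 9} with hSdef
      set A : ℕ := ⌊L^3⌋₊ with hA
      set B : ℕ := ⌊L^4⌋₊ with hB
      set M : ℕ := ⌊L^((5:ℝ)/2)⌋₊ with hM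
      have hr52 : (0:ℝ) < L ^ ((5:ℝ)/2) := Real.rpow_pos_of_pos hL0 _
      have hone52 : (1:ℝ) ≤ L ^ ((5:ℝ)/2) := Real.one_le_rpow hL (by norm_num)
      have hM1 : 1 ≤ M := Nat.le_floor (by exact_mod_cast hone52)
      have hMle : (M:ℝ) ≤ L ^ ((5:ℝ)/2) := Nat.floor_le hr52.le
      have hAle : (A:ℝ) ≤ L ^ 3 := Nat.floor_le (by positivity)
      have hBle : (B:ℝ) ≤ L ^ 4 := Nat.floor_le (by positivity)
      have e54 : L ^ ((5:ℝ)/2) * L ^ (4:ℕ) = L ^ ((13:ℝ)/2) := by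
        rw [← Real.rpow_natCast L 4, ← Real.rpow_add hL0]; norm_num
      have e913 : L ^ (9:ℕ) * (L ^ ((5:ℝ)/2))⁻¹ = L ^ ((13:ℝ)/2) := by
        rw [← Real.rpow_natCast L 9, ← Real.rpow_neg hL0.le, ← Real.rpow_add hL0]
        norm_num
      have e313 : L ^ (3:ℕ) ≤ L ^ ((13:ℝ)/2) := by
        rw [← Real.rpow_natCast L 3]
        exact Real.rpow_le_rpow_of_exponent_le hL (by norm_num)
      -- the bounding finset
      set n : ℤ → ℕ := fun a => ⌊L^9 / ((a:ℝ))^2⌋₊ with hn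
      set D : Finset ℤ := (Finset.Icc (-(A:ℤ)) A) \ (Finset.Icc (-(M:ℤ)) M) with hD
      set T : Finset (ℤ × ℤ) :=
        ((Finset.Icc (-(M:ℤ)) M) ×ˢ (Finset.Icc (-(B:ℤ)) B)) ∪
          D.biUnion (fun a => {a} ×ˢ (Finset.Icc (-(n a:ℤ)) (n a))) with hT
      have hST : S ⊆ ↑T := by
        rintro ⟨a, b⟩ ⟨h1, h2, h3⟩
        have haA : |a| ≤ (A:ℤ) := abs_le_nfloor a _ (by exact_mod_cast h1)
        have hbB : |b| ≤ (B:ℤ) := abs_le_nfloor b _ (by exact_mod_cast h2)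
        simp only [hT, Finset.coe_union, Set.mem_union, Finset.mem_coe, Finset.mem_union]
        by_cases hMa : |a| ≤ (M:ℤ)
        · left
          exact Finset.mem_product.mpr ⟨Finset.mem_Icc.mpr (abs_le.mp hMa),
            Finset.mem_Icc.mpr (abs_le.mp hbB)⟩
        · right
          rw [Finset.mem_biUnion]
          refine ⟨a, ?_, ?_⟩
          · simp only [hD, Finset.mem_sdiff, Finset.mem_Icc]
            exact ⟨abs_le.mp haA, fun hc => hMa (abs_le.mpr hc)⟩
          · have ha0 : a ≠ 0 := by rintro rfl; exact hMa (by simp)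
            have ha2 : (0:ℝ) < (a:ℝ)^2 := by positivity
            have hb' : |(b:ℝ)| ≤ L^9 / (a:ℝ)^2 := by
              rw [le_div_iff₀ ha2]
              have : ((↑(a ^ 2 * |b|) : ℝ)) ≤ L ^ 9 := h3
              push_cast at this
              linarith [this]
            have hbn : |b| ≤ ((n a : ℕ) : ℤ) := abs_le_nfloor b _ (by exact_mod_cast hb')
            exact Finset.mem_product.mpr ⟨Finset.mem_singleton_self a,
              Finset.mem_Icc.mpr (abs_le.mp hbn)⟩
      have hfin : (↑T : Set (ℤ×ℤ)).Finite := Finset.finite_toSet _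
      have hcard : Nat.card S ≤ T.card := by
        calc Nat.card S ≤ Nat.card (↑T : Set (ℤ×ℤ)) := Nat.card_mono hfin hST
          _ = T.card := by simp [Nat.card_coe_set_eq, Set.ncard_coe_finset]
      -- card bounds
      have hTcard : T.card ≤ (2*M+1) * (2*B+1) + ∑ a ∈ D, (2 * n a + 1) := by
        calc T.card ≤ ((Finset.Icc (-(M:ℤ)) M) ×ˢ (Finset.Icc (-(B:ℤ)) B)).card
            + (D.biUnion (fun a => {a} ×ˢ (Finset.Icc (-(n a:ℤ)) (n a)))).card :=
              Finset.card_union_le _ _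
          _ ≤ (2*M+1) * (2*B+1) + ∑ a ∈ D, (2 * n a + 1) := by
              gcongr
              · apply le_of_eq
                rw [Finset.card_product]
                simp only [Int.card_Icc]
                have h1 : (((M:ℤ))+1 - (-(M:ℤ))).toNat = 2*M+1 := by omega
                have h2 : (((B:ℤ))+1 - (-(B:ℤ))).toNat = 2*B+1 := by omega
                rw [h1, h2]
              · calc (D.biUnion _).card ≤ ∑ a ∈ D, ({a} ×ˢ (Finset.Icc (-(n a:ℤ)) (n a))).card :=
                    Finset.card_biUnion_le
                  _ ≤ ∑ a ∈ D, (2 * n a + 1) := by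
                      apply Finset.sum_le_sum
                      intro a _
                      simp [Int.card_Icc]
                      omega
      -- real bound for the sum
      -- sum of inverse squares over D
      have hDeq : D = Finset.Icc (-(A:ℤ)) (-((M:ℤ)+1)) ∪ Finset.Icc ((M:ℤ)+1) A := by
        ext x
        simp only [hD, Finset.mem_sdiff, Finset.mem_union, Finset.mem_Icc]
        omega
      have hDdisj : Disjoint (Finset.Icc (-(A:ℤ)) (-((M:ℤ)+1))) (Finset.Icc ((M:ℤ)+1) A) := by
        rw [Finset.disjoint_left]
        intro x hx hx'
        simp only [Finset.mem_Icc] at hx hx'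
        omega
      have himg : Finset.Icc (-(A:ℤ)) (-((M:ℤ)+1)) = (Finset.Icc ((M:ℤ)+1) A).image (fun x => -x) := by
        ext x
        simp only [Finset.mem_image, Finset.mem_Icc]
        constructor
        · intro h; exact ⟨-x, by omega, by omega⟩
        · rintro ⟨y, hy, rfl⟩; omega
      have hnegsum : ∑ a ∈ Finset.Icc (-(A:ℤ)) (-((M:ℤ)+1)), ((a:ℝ)^2)⁻¹
          = ∑ a ∈ Finset.Icc ((M:ℤ)+1) A, ((a:ℝ)^2)⁻¹ := by
        rw [himg, Finset.sum_image (by intro x _ y _ h; have h' : -x = -y := h; omega)]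
        apply Finset.sum_congr rfl
        intro x _
        push_cast
        rw [neg_sq]
      have hDinv : ∑ a ∈ D, (((a:ℝ))^2)⁻¹ ≤ 2 * (M:ℝ)⁻¹ := by
        rw [hDeq, Finset.sum_union hDdisj, hnegsum]
        have := sum_inv_sq M hM1 A
        linarith
      have hDcard : (D.card : ℝ) ≤ 3 * L ^ ((13:ℝ)/2) := by
        have h1 : D.card ≤ (Finset.Icc (-(A:ℤ)) A).card := Finset.card_le_card (by rw [hD]; exact Finset.sdiff_subset)
        have h2 : (Finset.Icc (-(A:ℤ)) A).card = 2*A+1 := by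
          simp only [Int.card_Icc]; omega
        have h3 : (1:ℝ) ≤ L ^ (3:ℕ) := one_le_pow₀ hL
        calc (D.card : ℝ) ≤ ((2*A+1 : ℕ) : ℝ) := by exact_mod_cast h1.trans (le_of_eq h2)
          _ = 2*(A:ℝ)+1 := by push_cast; ring
          _ ≤ 3 * L ^ (3:ℕ) := by linarith
          _ ≤ 3 * L ^ ((13:ℝ)/2) := by linarith
      have hnle : ∀ a ∈ D, ((n a : ℕ) : ℝ) ≤ L^9 * (((a:ℝ))^2)⁻¹ := by
        intro a _
        have : ((n a : ℕ) : ℝ) ≤ L^9 / ((a:ℝ))^2 :=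
          Nat.floor_le (div_nonneg (by positivity) (sq_nonneg _))
        rw [div_eq_mul_inv] at this
        exact this
      have hDsum : ∑ a ∈ D, ((2 * n a + 1 : ℕ) : ℝ) ≤ 3 * L ^ ((13:ℝ)/2) + 2 * L^9 * (2 * (M:ℝ)⁻¹) := by
        have step1 : ∑ a ∈ D, ((2 * n a + 1 : ℕ) : ℝ) ≤ ∑ a ∈ D, (2 * (L^9 * (((a:ℝ))^2)⁻¹) + 1) := by
          apply Finset.sum_le_sum
          intro a ha
          push_cast
          have := hnle a ha
          linarith
        have step2 : ∑ a ∈ D, (2 * (L^9 * (((a:ℝ))^2)⁻¹) + 1)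
            = 2 * L^9 * (∑ a ∈ D, (((a:ℝ))^2)⁻¹) + D.card := by
          rw [Finset.sum_add_distrib, Finset.sum_const, nsmul_eq_mul, mul_one]
          congr 1
          rw [mul_assoc, Finset.mul_sum, Finset.mul_sum]
        have step3 : 2 * L^9 * (∑ a ∈ D, (((a:ℝ))^2)⁻¹) ≤ 2 * L^9 * (2 * (M:ℝ)⁻¹) := by
          apply mul_le_mul_of_nonneg_left hDinv (by positivity)
        linarith
      -- combine
      have hMub : (2*(M:ℝ)+1) ≤ 3 * L ^ ((5:ℝ)/2) := by linarith
      have hBub : (2*(B:ℝ)+1) ≤ 3 * L ^ (4:ℕ) := by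
        have : (1:ℝ) ≤ L ^ (4:ℕ) := one_le_pow₀ hL
        linarith
      have hMinv : (M:ℝ)⁻¹ ≤ 2 * (L ^ ((5:ℝ)/2))⁻¹ := by
        have hMpos : (0:ℝ) < M := by exact_mod_cast hM1
        have h2M : L ^ ((5:ℝ)/2) ≤ 2 * M := by
          have := Nat.lt_floor_add_one (L ^ ((5:ℝ)/2))
          have hM1R : (1:ℝ) ≤ (M:ℝ) := by exact_mod_cast hM1
          rw [← hM] at this
          linarith
        have hinv : (2*(M:ℝ))⁻¹ ≤ (L ^ ((5:ℝ)/2))⁻¹ := inv_anti₀ hr52 h2M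
        calc (M:ℝ)⁻¹ = 2 * (2*(M:ℝ))⁻¹ := by field_simp
          _ ≤ 2 * (L ^ ((5:ℝ)/2))⁻¹ := by linarith
      have hfinal : ((2*M+1) * (2*B+1) + ∑ a ∈ D, (2 * n a + 1) : ℕ) ≤ 100 * L ^ ((13:ℝ)/2) := by
        push_cast [Nat.cast_sum]
        have hprod : (2*(M:ℝ)+1) * (2*(B:ℝ)+1) ≤ 9 * L ^ ((13:ℝ)/2) := by
          have hB0 : (0:ℝ) ≤ 2*(B:ℝ)+1 := by positivity
          have h4pos : (0:ℝ) < L ^ (4:ℕ) := by positivity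
          calc (2*(M:ℝ)+1) * (2*(B:ℝ)+1) ≤ (3 * L ^ ((5:ℝ)/2)) * (3 * L ^ (4:ℕ)) := by
                apply mul_le_mul hMub hBub hB0 (by positivity)
            _ = 9 * (L ^ ((5:ℝ)/2) * L ^ (4:ℕ)) := by ring
            _ = 9 * L ^ ((13:ℝ)/2) := by rw [e54]
          -- done
        have hhyp : 2 * L^9 * (2 * (M:ℝ)⁻¹) ≤ 8 * L ^ ((13:ℝ)/2) := by
          calc 2 * L^9 * (2 * (M:ℝ)⁻¹) ≤ 2 * L^9 * (2 * (2 * (L ^ ((5:ℝ)/2))⁻¹)) := by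
                apply mul_le_mul_of_nonneg_left (by linarith) (by positivity)
            _ = 8 * (L ^ (9:ℕ) * (L ^ ((5:ℝ)/2))⁻¹) := by ring
            _ = 8 * L ^ ((13:ℝ)/2) := by rw [e913]
        have hDsum' := hDsum
        push_cast at hDsum'
        have hLpos : (0:ℝ) ≤ L ^ ((13:ℝ)/2) := by positivity
        linarith
      calc (Nat.card S : ℝ) ≤ (T.card : ℝ) := by exact_mod_cast hcard
        _ ≤ (((2*M+1) * (2*B+1) + ∑ a ∈ D, (2 * n a + 1) : ℕ) : ℝ) := by exact_mod_cast hTcard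
        _ ≤ 100 * L ^ ((13:ℝ)/2) := hfinal
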